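/- arXiv:2408.13481 — 3 statements merged into one kernel-verified Lean document; each statement's English description precedes it below -/
import Mathlib

section
/- Let n be a positive integer, p a prime dividing n, write n = p·n', and let c be a nonnegative integer with p ∤ c. Then the sum over i from 1 to n−1 with p ∤ (n−i) of ⌊(c+i)/n⌋ equals c − ⌊c/p⌋. -/
/-- Hermite identity for natural division. -/
theorem hermite_nat (n : ℕ) (hn : 0 < n) : ∀ c : ℕ, ∑ i ∈ Finset.range n, (c + i) / n = c := by
  intro c
  induction c with
  | zero =>
    apply Finset.sum_eq_zero
    intro i hi
    simpa using Nat.div_eq_of_lt (Finset.mem_range.mp hi)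
  | succ c ih =>
    have hcongr : ∑ i ∈ Finset.range n, (c + 1 + i) / n
        = ∑ i ∈ Finset.range n, (c + (i + 1)) / n := by
      apply Finset.sum_congr rfl
      intro i _
      congr 1
      omega
    have h1 : ∑ i ∈ Finset.range (n + 1), (c + i) / n
        = ∑ i ∈ Finset.range n, (c + (i + 1)) / n + (c + 0) / n :=
      Finset.sum_range_succ' (fun j => (c + j) / n) n
    have h2 : ∑ i ∈ Finset.range (n + 1), (c + i) / n
        = ∑ i ∈ Finset.range n, (c + i) / n + (c + n) / n :=
      Finset.sum_range_succ (fun j => (c + j) / n) n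
    have h3 : (c + n) / n = c / n + 1 := Nat.add_div_right c hn
    have h4 : (c + 0) / n = c / n := by rw [Nat.add_zero]
    omega

/-- Krasner-type counting identity: for a prime `p` dividing `n` and `c ≥ 0` with `p ∤ c`,
`∑_{1 ≤ i ≤ n-1, p ∤ (n-i)} ⌊(c+i)/n⌋ = c - ⌊c/p⌋` (floor = natural division). -/
theorem stmt_0 (p n c : ℕ) (hp : p.Prime) (hn : 0 < n) (hpn : p ∣ n) (hc : ¬ p ∣ c) :
    ∑ i ∈ (Finset.Ico 1 n).filter (fun i => ¬ p ∣ (n - i)), (c + i) / n = c - c / p := by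
  obtain ⟨m, rfl⟩ := hpn
  have hp0 : 0 < p := hp.pos
  have hm : 0 < m := by
    rcases Nat.eq_zero_or_pos m with h | h
    · subst h; simp at hn
    · exact h
  -- set equality
  have hset : (Finset.Ico 1 (p * m)).filter (fun i => ¬ p ∣ (p * m - i))
      = (Finset.range (p * m)).filter (fun i => ¬ p ∣ i) := by
    ext i
    simp only [Finset.mem_filter, Finset.mem_Ico, Finset.mem_range]
    constructor
    · rintro ⟨⟨h1, h2⟩, h3⟩
      refine ⟨h2, fun hdvd => h3 ?_⟩
      exact (Nat.dvd_sub (Dvd.intro m rfl) hdvd)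
    · rintro ⟨h1, h2⟩
      have hi1 : 1 ≤ i := by
        rcases Nat.eq_zero_or_pos i with h | h
        · exact absurd (h ▸ dvd_zero p) h2
        · exact h
      refine ⟨⟨hi1, h1⟩, fun hdvd => h2 ?_⟩
      have : p ∣ (p * m - (p * m - i)) := Nat.dvd_sub (Dvd.intro m rfl) hdvd
      rwa [Nat.sub_sub_self (le_of_lt h1)] at this
  have htot : ∑ i ∈ Finset.range (p * m), (c + i) / (p * m) = c := hermite_nat _ hn c
  -- image description of multiples of p
  have himg : (Finset.range (p * m)).filter (fun i => p ∣ i)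
      = (Finset.range m).image (fun j => p * j) := by
    ext i
    simp only [Finset.mem_filter, Finset.mem_range, Finset.mem_image]
    constructor
    · rintro ⟨hi, k, rfl⟩
      exact ⟨k, Nat.lt_of_mul_lt_mul_left hi, rfl⟩
    · rintro ⟨k, hk, rfl⟩
      exact ⟨(Nat.mul_lt_mul_left hp0).mpr hk, k, rfl⟩
  have hdvd : ∑ i ∈ (Finset.range (p * m)).filter (fun i => p ∣ i), (c + i) / (p * m)
      = c / p := by
    rw [himg, Finset.sum_image (fun a _ b _ h => Nat.eq_of_mul_eq_mul_left hp0 h)]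
    have : ∀ j, (c + p * j) / (p * m) = (c / p + j) / m := by
      intro j
      rw [← Nat.div_div_eq_div_mul, Nat.add_mul_div_left c j hp0]
    simp only [this]
    exact hermite_nat m hm (c / p)
  have hsplit := Finset.sum_filter_add_sum_filter_not (Finset.range (p * m))
    (fun i => p ∣ i) (fun i => (c + i) / (p * m))
  rw [hset]
  omega
end

section
/- Let L/K be a finite separable extension of complete discretely valued fields of degree n with discriminant exponent d_L, let α₁, …, α_n be the conjugates in an algebraic closure of a generator α of O_L over O_K. Then for any two indices i ≠ j, n·ord(αᵢ − α_j) ≤ d_L, where ord is the valuation extending the normalized valuation of K. -/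
/-- Let `α₁, …, αₙ ∈ Ω` be the (integral, pairwise conjugate) conjugates of a generator
of `O_L` over `O_K`, and let `v` be a (multiplicative, rank-one) valuation on `Ω`
invariant under `K`-automorphisms, extending the normalized valuation of `K`. The
discriminant exponent `d_L` is `ord(∏_{k≠l}(α_l − α_k))`. Then for all `i ≠ j`,
`n·ord(αᵢ − α_j) ≤ d_L`; multiplicatively, `v(disc) ≤ v(αᵢ − α_j)ⁿ`. -/
theorem stmt_10 (K Ω : Type*) [Field K] [Field Ω] [Algebra K Ω]
    (v : Valuation Ω NNReal) (n : ℕ) (hn : 0 < n) (α : Fin n → Ω)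
    (hint : ∀ k, v (α k) ≤ 1)
    (hinv : ∀ (σ : Ω ≃ₐ[K] Ω) (x : Ω), v (σ x) = v x)
    (hperm : ∀ σ : Ω ≃ₐ[K] Ω, ∃ π : Equiv.Perm (Fin n), ∀ k, σ (α k) = α (π k))
    (htrans : ∀ i j : Fin n, ∃ σ : Ω ≃ₐ[K] Ω, σ (α i) = α j)
    (i j : Fin n) (hij : i ≠ j) :
    v (∏ q ∈ Finset.univ.offDiag, (α q.2 - α q.1)) ≤ v (α i - α j) ^ n := by
  classical
  by_cases hα : Function.Injective α
  · choose σ hσ using htrans i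
    choose π hπ using hperm
    set f : Fin n → Fin n × Fin n := fun l => (π (σ l) i, π (σ l) j) with hf
    have hfi : ∀ l, π (σ l) i = l := fun l => hα (by rw [← hπ (σ l) i, hσ l])
    have hne : ∀ l, π (σ l) j ≠ l := by
      intro l h
      apply hij
      apply hα
      have h1 : α (π (σ l) j) = α l := by rw [h]
      rw [← hπ (σ l) j, ← hσ l] at h1
      exact ((σ l).injective h1).symm
    have finj : Function.Injective f := by
      intro a b hab
      have := congrArg Prod.fst hab
      simpa [hf, hfi] using this
    have hsub : Finset.image f Finset.univ ⊆ Finset.univ.offDiag := by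
      intro q hq
      rw [Finset.mem_image] at hq
      obtain ⟨l, _, rfl⟩ := hq
      simp [Finset.mem_offDiag, hf, hfi, (hne l).symm]
    have key : ∀ l, v (α (f l).2 - α (f l).1) = v (α i - α j) := by
      intro l
      simp only [hf]
      rw [← hπ, ← hπ, ← map_sub (σ l), hinv, v.map_sub_swap]
    have hle1 : ∀ q : Fin n × Fin n, v (α q.2 - α q.1) ≤ 1 := fun q =>
      le_trans (v.map_sub _ _) (max_le (hint _) (hint _))
    calc v (∏ q ∈ Finset.univ.offDiag, (α q.2 - α q.1))
        = ∏ q ∈ Finset.univ.offDiag, v (α q.2 - α q.1) := map_prod v _ _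
      _ ≤ ∏ q ∈ Finset.image f Finset.univ, v (α q.2 - α q.1) := by
          rw [← Finset.prod_sdiff hsub]
          calc (∏ q ∈ Finset.univ.offDiag \ Finset.image f Finset.univ, v (α q.2 - α q.1)) *
                ∏ q ∈ Finset.image f Finset.univ, v (α q.2 - α q.1)
              ≤ 1 * ∏ q ∈ Finset.image f Finset.univ, v (α q.2 - α q.1) :=
                mul_le_mul_left (Finset.prod_le_one (fun _ _ => zero_le)
                  (fun q _ => hle1 q)) _
            _ = _ := one_mul _
      _ = ∏ l : Fin n, v (α (f l).2 - α (f l).1) :=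
          Finset.prod_image (fun a _ b _ h => finj h)
      _ = ∏ _l : Fin n, v (α i - α j) := by simp only [key]
      _ = v (α i - α j) ^ n := by simp
  · rw [Function.not_injective_iff] at hα
    obtain ⟨a, b, hab, hne⟩ := hα
    have : (∏ q ∈ Finset.univ.offDiag, (α q.2 - α q.1)) = 0 :=
      Finset.prod_eq_zero (i := ((b, a) : Fin n × Fin n))
        (by simp [Finset.mem_offDiag, Ne.symm hne]) (by simp [hab])
    rw [this, map_zero]
    exact zero_le
end

section
/- The Jacobian determinant of the elementary symmetric polynomials: det(∂sⱼ/∂xᵢ)_{1≤i,j≤n} = ∏_{i<j} (xᵢ − x_j), where s₁,…,s_n are the elementary symmetric polynomials in x₁,…,x_n. -/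
open MvPolynomial Finset

lemma pderivProdX {σ : Type*} [DecidableEq σ] (i : σ) (t : Finset σ) :
    pderiv i (∏ m ∈ t, X m : MvPolynomial σ ℤ) =
      if i ∈ t then ∏ m ∈ t.erase i, X m else 0 := by
  induction t using Finset.induction_on with
  | empty => simp
  | insert a s hat ih =>
    rw [Finset.prod_insert hat, pderiv_mul, ih]
    by_cases hia : i = a
    · subst hia
      simp [hat, Finset.erase_insert hat]
    · rw [pderiv_X_of_ne (Ne.symm hia)]
      by_cases his : i ∈ s
      · simp only [his, if_pos, mul_zero, zero_add, mem_insert, hia, false_or, if_true, zero_mul,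
          Finset.erase_insert_of_ne (fun h => hia h.symm)]
        rw [Finset.prod_insert (fun h => hat (Finset.mem_of_mem_erase h))]
      · simp [his, hia]

lemma pderivEsymm (n k : ℕ) (i : Fin n) :
    pderiv i (esymm (Fin n) ℤ (k+1)) = ∑ u ∈ (univ.erase i).powersetCard k, ∏ m ∈ u, X m := by
  rw [esymm, map_sum]
  simp_rw [pderivProdX]
  rw [Finset.sum_ite, Finset.sum_const_zero, add_zero]
  refine Finset.sum_nbij' (fun t => t.erase i) (fun u => insert i u) ?_ ?_ ?_ ?_ ?_
  · intro t ht
    simp only [Finset.mem_filter, Finset.mem_powersetCard] at ht ⊢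
    refine ⟨fun x hx => Finset.mem_erase.2 ⟨(Finset.mem_erase.1 hx).1, Finset.mem_univ _⟩, ?_⟩
    rw [Finset.card_erase_of_mem ht.2, ht.1.2]; rfl
  · intro u hu
    simp only [Finset.mem_filter, Finset.mem_powersetCard] at hu ⊢
    have hiu : i ∉ u := fun h => (Finset.mem_erase.1 (hu.1 h)).1 rfl
    exact ⟨⟨fun x _ => Finset.mem_univ x, by rw [Finset.card_insert_of_notMem hiu, hu.2]⟩,
      Finset.mem_insert_self i u⟩
  · intro t ht
    simp only [Finset.mem_filter] at ht
    exact Finset.insert_erase ht.2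
  · intro u hu
    simp only [Finset.mem_powersetCard] at hu
    exact Finset.erase_insert (fun h => (Finset.mem_erase.1 (hu.1 h)).1 rfl)
  · intro t ht
    rfl

lemma vietaEval (n : ℕ) (i l : Fin n) :
    ∑ j ∈ Finset.range n, (-1 : MvPolynomial (Fin n) ℤ)^j *
        (∑ u ∈ (univ.erase i).powersetCard j, ∏ m ∈ u, X m) * (X l)^(n-1-j)
      = ∏ m ∈ univ.erase i, (X l - X m) := by
  have hn : 0 < n := i.pos
  have hcard : Multiset.card (((univ.erase i).val).map (X : Fin n → MvPolynomial (Fin n) ℤ)) = n - 1 := by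
    rw [Multiset.card_map]
    simp [Finset.card_erase_of_mem]
  have h := Multiset.prod_X_sub_X_eq_sum_esymm (((univ.erase i).val).map (X : Fin n → MvPolynomial (Fin n) ℤ))
  have h2 := congrArg (Polynomial.eval (X l : MvPolynomial (Fin n) ℤ)) h
  rw [Polynomial.eval_multiset_prod, Multiset.map_map, Multiset.map_map] at h2
  simp only [Function.comp, Polynomial.eval_sub, Polynomial.eval_X, Polynomial.eval_C] at h2
  rw [hcard, Nat.sub_add_cancel hn, Polynomial.eval_finset_sum] at h2
  simp only [Polynomial.eval_mul, Polynomial.eval_pow, Polynomial.eval_neg, Polynomial.eval_one,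
    Polynomial.eval_C, Polynomial.eval_X, Finset.esymm_map_val] at h2
  rw [show (∏ m ∈ univ.erase i, (X l - X m)) =
      (Multiset.map (fun x => X l - X x) (univ.erase i).val).prod from rfl, h2]
  refine Finset.sum_congr rfl fun j _ => ?_
  ring
open Finset Equiv

lemma revDecomp (n : ℕ) : (Fin.revPerm : Equiv.Perm (Fin (n+2))) =
    Equiv.Perm.decomposeFin.symm (Fin.last (n+1), Fin.revPerm * finRotate (n+1)) := by
  apply Equiv.ext
  intro x
  refine Fin.cases ?_ ?_ x
  · simp [Fin.rev_zero]
  · intro j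
    rw [Equiv.Perm.decomposeFin_symm_apply_succ]
    rw [Equiv.Perm.mul_apply, Fin.revPerm_apply, Fin.revPerm_apply, finRotate_succ_apply]
    rcases eq_or_ne j (Fin.last n) with hj | hj
    · subst hj
      rw [show Fin.last n + 1 = 0 by ext; simp [Fin.val_add_one], Fin.rev_zero, Fin.succ_last,
        Fin.rev_last]
      exact (Equiv.swap_apply_right _ _).symm
    · have hjlt : (j : ℕ) < n := by
        rcases Fin.lt_or_eq_of_le (Fin.le_last j) with h | h
        · exact_mod_cast h
        · exact absurd h hj
      rw [Equiv.swap_apply_of_ne_of_ne (Fin.succ_ne_zero _) ?hne]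
      · ext
        simp only [Fin.val_rev, Fin.val_succ, Fin.val_add_one, hj, if_false]
        omega
      · rw [Ne, ← Fin.succ_last, Fin.succ_inj, ← Fin.rev_zero, Fin.rev_inj]
        intro h
        apply hj
        have := congrArg Fin.val h
        rw [Fin.val_add_one] at this
        split at this
        · assumption
        · simp at this

lemma signRev : ∀ n : ℕ, Equiv.Perm.sign (Fin.revPerm : Equiv.Perm (Fin n)) = (-1)^(n.choose 2) := by
  intro n
  induction n using Nat.twoStepInduction with
  | zero => rw [Subsingleton.elim (Fin.revPerm : Equiv.Perm (Fin 0)) 1]; simp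
  | one => rw [Subsingleton.elim (Fin.revPerm : Equiv.Perm (Fin 1)) 1]; simp
  | more n ih1 ih =>
    rw [revDecomp n, Equiv.Perm.decomposeFin.symm_sign, map_mul, sign_finRotate, ih,
      if_neg (Fin.last_pos).ne']
    have h2 : (n+2).choose 2 = (n+1).choose 2 + (n + 1) := by
      rw [show n + 2 = (n+1).succ from rfl, show (2:ℕ) = Nat.succ 1 from rfl,
        Nat.choose_succ_succ]
      simp [Nat.add_comm]
    rw [h2, pow_add]
    group
    rw [Nat.add_sub_cancel_left]

lemma filterProd {n : ℕ} {M : Type*} [CommMonoid M] (f : Fin n → Fin n → M) :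
    ∏ q ∈ univ.filter (fun q : Fin n × Fin n => q.1 < q.2), f q.1 q.2
      = ∏ i, ∏ j ∈ Ioi i, f i j := by
  rw [Finset.prod_filter, ← Finset.univ_product_univ, Finset.prod_product]
  refine Finset.prod_congr rfl fun i _ => ?_
  rw [show (Finset.Ioi i) = univ.filter (fun j => i < j) by ext; simp, Finset.prod_filter]

lemma offDiagSplit (n : ℕ) :
    (∏ i : Fin n, ∏ m ∈ univ.erase i, (X i - X m : MvPolynomial (Fin n) ℤ))
      = (∏ q ∈ univ.filter (fun q : Fin n × Fin n => q.1 < q.2), (X q.1 - X q.2)) *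
        (Matrix.vandermonde (X : Fin n → MvPolynomial (Fin n) ℤ)).det := by
  have h := Finset.prod_prod_Ioi_mul_eq_prod_prod_off_diag
    (fun a b => (X b - X a : MvPolynomial (Fin n) ℤ))
  simp_rw [Finset.compl_singleton] at h
  calc (∏ i : Fin n, ∏ m ∈ univ.erase i, (X i - X m : MvPolynomial (Fin n) ℤ))
      = ∏ i : Fin n, ∏ j ∈ Ioi i, (X i - X j) * (X j - X i) := by
        convert h.symm using 3
    _ = (∏ i : Fin n, ∏ j ∈ Ioi i, (X i - X j)) *
          ∏ i : Fin n, ∏ j ∈ Ioi i, (X j - X i) := by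
        simp_rw [Finset.prod_mul_distrib]
    _ = _ := by
        rw [Matrix.det_vandermonde,
          filterProd (fun a b => (X a - X b : MvPolynomial (Fin n) ℤ))]

open MvPolynomial in
/-- Jacobian determinant of the elementary symmetric polynomials:
`det(∂sⱼ/∂xᵢ) = ∏_{i<j} (xᵢ − x_j)` in `ℤ[x₁,…,xₙ]`. -/
theorem stmt_13 (n : ℕ) :
    (Matrix.of fun i j : Fin n =>
        MvPolynomial.pderiv i (MvPolynomial.esymm (Fin n) ℤ (j + 1))).det =
      ∏ q ∈ Finset.univ.filter (fun q : Fin n × Fin n => q.1 < q.2),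
        (MvPolynomial.X q.1 - MvPolynomial.X q.2) := by
  classical
  set A : Matrix (Fin n) (Fin n) (MvPolynomial (Fin n) ℤ) :=
    Matrix.of fun i j : Fin n => pderiv i (esymm (Fin n) ℤ (j + 1)) with hA
  set B : Matrix (Fin n) (Fin n) (MvPolynomial (Fin n) ℤ) :=
    Matrix.of fun j l => (-1)^(j:ℕ) * X l ^ (n - 1 - (j:ℕ)) with hBdef
  have hAB : A * B = Matrix.diagonal (fun i => ∏ m ∈ univ.erase i, (X i - X m)) := by
    refine Matrix.ext fun i l => ?_
    rw [Matrix.mul_apply]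
    simp only [hA, hBdef, Matrix.of_apply]
    have key : ∑ j : Fin n, pderiv i (esymm (Fin n) ℤ ((j:ℕ) + 1)) *
        ((-1)^(j:ℕ) * X l ^ (n - 1 - (j:ℕ))) = ∏ m ∈ univ.erase i, (X l - X m) := by
      rw [← vietaEval n i l,
        ← Fin.sum_univ_eq_sum_range (fun j => (-1 : MvPolynomial (Fin n) ℤ)^j *
          (∑ u ∈ (univ.erase i).powersetCard j, ∏ m ∈ u, X m) * (X l)^(n-1-j)) n]
      refine Finset.sum_congr rfl fun j _ => ?_
      rw [pderivEsymm]
      ring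
    rw [key]
    by_cases hl : l = i
    · subst hl
      rw [Matrix.diagonal_apply_eq]
    · rw [Matrix.diagonal_apply_ne _ fun h => hl h.symm]
      exact Finset.prod_eq_zero (f := fun m => (X l - X m : MvPolynomial (Fin n) ℤ))
        (Finset.mem_erase.2 ⟨hl, Finset.mem_univ l⟩) (sub_self _)
  have hdetB : B.det = (Matrix.vandermonde (X : Fin n → MvPolynomial (Fin n) ℤ)).det := by
    have hB : B = (Matrix.diagonal (fun j : Fin n => ((-1 : MvPolynomial (Fin n) ℤ))^(j:ℕ))) *
        ((Matrix.vandermonde (X : Fin n → MvPolynomial (Fin n) ℤ)).transpose.submatrix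
          (Fin.revPerm : Equiv.Perm (Fin n)) id) := by
      ext j l
      rw [Matrix.diagonal_mul]
      simp only [hBdef, Matrix.of_apply, Matrix.submatrix_apply, Matrix.transpose_apply,
        Matrix.vandermonde_apply, id, Fin.revPerm_apply, Fin.val_rev]
      rw [show n - 1 - (j:ℕ) = n - ((j:ℕ)+1) by omega]
    rw [hB, Matrix.det_mul, Matrix.det_diagonal, Matrix.det_permute, Matrix.det_transpose,
      Finset.prod_pow_eq_pow_sum]
    have hsum : ∑ j : Fin n, (j:ℕ) = n.choose 2 := by
      rw [Fin.sum_univ_eq_sum_range (fun j => j) n, Finset.sum_range_id, Nat.choose_two_right]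
    rw [hsum, signRev]
    push_cast
    rw [← mul_assoc, ← pow_add, Even.neg_one_pow ⟨n.choose 2, rfl⟩, one_mul]
  have h1 : A.det * B.det = ∏ i : Fin n, ∏ m ∈ univ.erase i, (X i - X m) := by
    rw [← Matrix.det_mul, hAB, Matrix.det_diagonal]
  rw [hdetB, offDiagSplit] at h1
  have hW : (Matrix.vandermonde (X : Fin n → MvPolynomial (Fin n) ℤ)).det ≠ 0 := by
    rw [Matrix.det_vandermonde_ne_zero_iff]
    exact fun a b h => by simpa using (MvPolynomial.X_injective h)
  exact mul_right_cancel₀ hW h1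
end
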